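/- Let A be a real n×n matrix satisfying A_{ij}·A_{ji} = 0 for all i, j (in particular, A has zero diagonal and no pair of oppositely directed nonzero entries; any DAG adjacency matrix satisfies this). Let B = A + Aᵀ. Then ‖A‖₂ ≤ max_{1≤j≤n} Σ_{i=1}^n |B_{ij}|, where ‖·‖₂ denotes the spectral norm. -/

import Mathlib

open Matrix

/-- The spectral norm (ℓ²→ℓ² operator norm) of a real matrix. -/
noncomputable def matrixSpectralNorm {m n : Type*} [Fintype m] [Fintype n] [DecidableEq n]
    (M : Matrix m n ℝ) : ℝ :=
  ‖LinearMap.toContinuousLinearMap (Matrix.toEuclideanLin M)‖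

/-- If `A` is a real `n × n` matrix with `A i j * A j i = 0` for all `i, j`
(as is the case for any DAG adjacency matrix) and `B = A + Aᵀ`, then
`‖A‖₂ ≤ max_j ∑_i |B i j|`. -/
theorem spectralNorm_le_max_col_sum_symmetrization {n : ℕ} (hn : 0 < n)
    (A : Matrix (Fin n) (Fin n) ℝ) (hA : ∀ i j, A i j * A j i = 0) :
    matrixSpectralNorm A ≤
      Finset.univ.sup' (Finset.univ_nonempty_iff.mpr (Fin.pos_iff_nonempty.mp hn))
        (fun j => ∑ i, |(A + Aᵀ) i j|) := by
  set C : ℝ := Finset.univ.sup' (Finset.univ_nonempty_iff.mpr (Fin.pos_iff_nonempty.mp hn))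
      (fun j => ∑ i, |(A + Aᵀ) i j|) with hC
  -- entrywise bound
  have hentry : ∀ i j, |A i j| ≤ |(A + Aᵀ) i j| := by
    intro i j
    rcases mul_eq_zero.mp (hA i j) with h | h
    · simp [h, abs_nonneg]
    · simp [Matrix.add_apply, Matrix.transpose_apply, h]
  have hCsum : ∀ j, ∑ i, |(A + Aᵀ) i j| ≤ C := fun j =>
    Finset.le_sup' (fun j => ∑ i, |(A + Aᵀ) i j|) (Finset.mem_univ j)
  have hcol : ∀ j, ∑ i, |A i j| ≤ C := fun j =>
    le_trans (Finset.sum_le_sum fun i _ => hentry i j) (hCsum j)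
  have hrow : ∀ i, ∑ j, |A i j| ≤ C := by
    intro i
    have : ∑ j, |A i j| ≤ ∑ j, |(A + Aᵀ) j i| := by
      apply Finset.sum_le_sum
      intro j _
      calc |A i j| ≤ |(A + Aᵀ) i j| := hentry i j
        _ = |(A + Aᵀ) j i| := by
          simp [Matrix.add_apply, Matrix.transpose_apply, add_comm, abs_sub_comm]
    exact this.trans (hCsum i)
  have hC0 : (0:ℝ) ≤ C :=
    le_trans (Finset.sum_nonneg fun i _ => abs_nonneg _) (hcol ⟨0, hn⟩)
  rw [matrixSpectralNorm]
  apply ContinuousLinearMap.opNorm_le_bound _ hC0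
  intro x
  have hxsq : ‖(LinearMap.toContinuousLinearMap (Matrix.toEuclideanLin A)) x‖ ^ 2
      ≤ (C * ‖x‖) ^ 2 := by
    rw [EuclideanSpace.norm_eq]
    rw [Real.sq_sqrt (Finset.sum_nonneg fun i _ => sq_nonneg _)]
    have hxval : ∀ i, ((LinearMap.toContinuousLinearMap (Matrix.toEuclideanLin A)) x) i
        = ∑ j, A i j * x j := by
      intro i
      rfl
    calc ∑ i, ‖((LinearMap.toContinuousLinearMap (Matrix.toEuclideanLin A)) x) i‖ ^ 2
        = ∑ i, (∑ j, A i j * x j) ^ 2 := by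
          simp only [Real.norm_eq_abs, sq_abs, hxval]
      _ ≤ ∑ i, (∑ j, |A i j| * |x j|) ^ 2 := by
          apply Finset.sum_le_sum
          intro i _
          rw [← sq_abs (∑ j, A i j * x j)]
          apply pow_le_pow_left₀ (abs_nonneg _)
          exact (Finset.abs_sum_le_sum_abs _ _).trans_eq (by simp [abs_mul])
      _ ≤ ∑ i, (∑ j, |A i j|) * (∑ j, |A i j| * (x j)^2) := by
          apply Finset.sum_le_sum
          intro i _
          apply Finset.sum_sq_le_sum_mul_sum_of_sq_eq_mul
          · intro j _; exact abs_nonneg _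
          · intro j _; exact mul_nonneg (abs_nonneg _) (sq_nonneg _)
          · intro j _; rw [mul_pow, sq_abs (x j)]; ring
      _ ≤ ∑ i, C * (∑ j, |A i j| * (x j)^2) := by
          apply Finset.sum_le_sum
          intro i _
          exact mul_le_mul_of_nonneg_right (hrow i)
            (Finset.sum_nonneg fun j _ => mul_nonneg (abs_nonneg _) (sq_nonneg _))
      _ = C * ∑ j, (∑ i, |A i j|) * (x j)^2 := by
          rw [← Finset.mul_sum, Finset.sum_comm]
          simp_rw [Finset.sum_mul]
      _ ≤ C * ∑ j, C * (x j)^2 := by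
          apply mul_le_mul_of_nonneg_left _ hC0
          apply Finset.sum_le_sum
          intro j _
          exact mul_le_mul_of_nonneg_right (hcol j) (sq_nonneg _)
      _ = (C * ‖x‖) ^ 2 := by
          rw [← Finset.mul_sum, EuclideanSpace.norm_eq]
          rw [mul_pow, Real.sq_sqrt (Finset.sum_nonneg fun i _ => sq_nonneg _)]
          simp [sq_abs]
          ring
  calc ‖(LinearMap.toContinuousLinearMap (Matrix.toEuclideanLin A)) x‖
      = Real.sqrt (‖(LinearMap.toContinuousLinearMap (Matrix.toEuclideanLin A)) x‖ ^ 2) :=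
        (Real.sqrt_sq (norm_nonneg _)).symm
    _ ≤ Real.sqrt ((C * ‖x‖)^2) := Real.sqrt_le_sqrt hxsq
    _ = C * ‖x‖ := Real.sqrt_sq (mul_nonneg hC0 (norm_nonneg _))
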